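/- One-point SPSA estimator bias bound: let f : X → ℝ be differentiable with L-Lipschitz gradient on a convex body X ⊆ ℝ^d containing a ball B_r(p₀) of radius r, and for 0 < δ < r define the query point x̂ = (1 − δ/r)x + (δ/r)(p₀ + r Z) where Z is uniform on {±e₁,…,±e_d}, and the estimator v̂ = (d/δ) f(x̂) Z. Then ‖E[v̂] − ∇f(x)‖ = O(δ); more precisely there is a constant C (depending on L, r, diam X) with ‖E[v̂] − ∇f(x)‖ ≤ CLδ. -/

import Mathlib

open scoped RealInnerProductSpace
open MeasureTheory Filter

private lemma taylor_bound {d : ℕ} (Us : Set (EuclideanSpace ℝ (Fin d)))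
    (f : EuclideanSpace ℝ (Fin d) → ℝ) (gf : EuclideanSpace ℝ (Fin d) → EuclideanSpace ℝ (Fin d))
    (L : ℝ) (hL : 0 ≤ L)
    (hgrad : ∀ x ∈ Us, HasGradientAt f (gf x) x)
    (hLip : ∀ x ∈ Us, ∀ y ∈ Us, ‖gf y - gf x‖ ≤ L * ‖y - x‖)
    (y v : EuclideanSpace ℝ (Fin d))
    (hseg : ∀ t ∈ Set.Icc (0:ℝ) 1, y + t • v ∈ Us) :
    |f (y + v) - f y - ⟪gf y, v⟫| ≤ L * ‖v‖ ^ 2 := by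
  set φ : ℝ → ℝ := fun t => f (y + t • v) - t * ⟪gf y, v⟫ with hφ
  have hy : y ∈ Us := by simpa using hseg 0 (by norm_num)
  have hderiv : ∀ t ∈ Set.Icc (0:ℝ) 1,
      HasDerivWithinAt φ (⟪gf (y + t • v) - gf y, v⟫) (Set.Icc (0:ℝ) 1) t := by
    intro t ht
    have h1 : HasDerivAt (fun s : ℝ => y + s • v) v t := by
      simpa using ((hasDerivAt_id t).smul_const v).const_add y
    have h2 : HasFDerivAt f (InnerProductSpace.toDual ℝ _ (gf (y + t • v))) (y + t • v) :=
      (hgrad _ (hseg t ht)).hasFDerivAt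
    have h3 : HasDerivAt (fun s : ℝ => f (y + s • v)) ⟪gf (y + t • v), v⟫ t := by
      simpa [InnerProductSpace.toDual_apply_apply, Function.comp_def] using h2.comp_hasDerivAt t h1
    have h4 : HasDerivAt φ (⟪gf (y + t • v), v⟫ - ⟪gf y, v⟫) t :=
      h3.sub (hasDerivAt_mul_const _)
    have := h4.hasDerivWithinAt (s := Set.Icc (0:ℝ) 1)
    simpa [inner_sub_left] using this
  have hbound : ∀ t ∈ Set.Icc (0:ℝ) 1, ‖⟪gf (y + t • v) - gf y, v⟫‖ ≤ L * ‖v‖ ^ 2 := by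
    intro t ht
    calc ‖⟪gf (y + t • v) - gf y, v⟫‖ ≤ ‖gf (y + t • v) - gf y‖ * ‖v‖ := norm_inner_le_norm _ _
      _ ≤ (L * ‖y + t • v - y‖) * ‖v‖ := by
          gcongr
          exact hLip _ hy _ (hseg t ht)
      _ ≤ L * ‖v‖ ^ 2 := by
          have he : ‖y + t • v - y‖ = |t| * ‖v‖ := by
            simp [add_sub_cancel_left, norm_smul]
          rw [he]
          have ht1 : |t| ≤ 1 := abs_le.mpr ⟨by linarith [ht.1], ht.2⟩
          have h0 := norm_nonneg v
          have h2 : L * (|t| * ‖v‖) * ‖v‖ ≤ L * (1 * ‖v‖) * ‖v‖ := by gcongr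
          calc L * (|t| * ‖v‖) * ‖v‖ ≤ L * (1 * ‖v‖) * ‖v‖ := h2
            _ = L * ‖v‖ ^ 2 := by ring
  have key := (convex_Icc (0:ℝ) 1).norm_image_sub_le_of_norm_hasDerivWithin_le
    hderiv hbound (Set.left_mem_Icc.mpr zero_le_one) (Set.right_mem_Icc.mpr zero_le_one)
  have hφ1 : φ 1 = f (y + v) - ⟪gf y, v⟫ := by simp [hφ]
  have hφ0 : φ 0 = f y := by simp [hφ]
  rw [hφ1, hφ0] at key
  calc |f (y + v) - f y - ⟪gf y, v⟫| = ‖f (y + v) - ⟪gf y, v⟫ - f y‖ := by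
        rw [Real.norm_eq_abs]; ring_nf
    _ ≤ L * ‖v‖ ^ 2 * ‖(1:ℝ) - 0‖ := key
    _ = L * ‖v‖ ^ 2 := by norm_num

theorem stmt19 {d : ℕ} (X : Set (EuclideanSpace ℝ (Fin d)))
    (hXconv : Convex ℝ X) (hXcpt : IsCompact X)
    (p0 : EuclideanSpace ℝ (Fin d)) (r : ℝ) (hr : 0 < r) (hball : Metric.closedBall p0 r ⊆ X)
    (Us : Set (EuclideanSpace ℝ (Fin d))) (hUopen : IsOpen Us) (hXU : X ⊆ Us)
    (f : EuclideanSpace ℝ (Fin d) → ℝ) (gf : EuclideanSpace ℝ (Fin d) → EuclideanSpace ℝ (Fin d)) (L : ℝ) (hL : 0 < L)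
    (hgrad : ∀ x ∈ Us, HasGradientAt f (gf x) x)
    (hLip : ∀ x ∈ Us, ∀ y ∈ Us, ‖gf y - gf x‖ ≤ L * ‖y - x‖) :
    ∃ C > (0 : ℝ), ∀ x ∈ X, ∀ δ : ℝ, 0 < δ → δ < r →
      ‖(∑ k : Fin d, ((2 * δ)⁻¹ *
            (f ((x - (δ / r) • (x - p0)) + δ • EuclideanSpace.single k (1 : ℝ))
              - f ((x - (δ / r) • (x - p0)) - δ • EuclideanSpace.single k (1 : ℝ)))) •
          EuclideanSpace.single k (1 : ℝ))
        - gf x‖ ≤ C * L * δ := by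
  have hp0 : p0 ∈ X := hball (Metric.mem_closedBall_self hr.le)
  obtain ⟨M, hM⟩ : ∃ M : ℝ, ∀ x ∈ X, ‖x - p0‖ ≤ M := by
    obtain ⟨z, _, hz⟩ := hXcpt.exists_isMaxOn ⟨p0, hp0⟩
      (Continuous.continuousOn (by continuity : Continuous fun x => ‖x - p0‖))
    exact ⟨‖z - p0‖, hz⟩
  have hM0 : 0 ≤ M := le_trans (norm_nonneg _) (hM p0 hp0)
  refine ⟨Real.sqrt d + M / r + 1, by positivity, ?_⟩
  intro x hx δ hδ hδr
  set xδ := x - (δ / r) • (x - p0) with hxδ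
  have hmem : ∀ (k : Fin d) (t : ℝ), |t| ≤ 1 →
      xδ + t • (δ • EuclideanSpace.single k (1:ℝ)) ∈ X := by
    intro k t ht
    have hδr' : 0 ≤ δ / r := by positivity
    have hδr1 : δ / r ≤ 1 := by
      rw [div_le_one hr]; linarith
    have hq : p0 + (t * r) • EuclideanSpace.single k (1:ℝ) ∈ Metric.closedBall p0 r := by
      simp only [Metric.mem_closedBall, dist_eq_norm, add_sub_cancel_left, norm_smul]
      have h1 : ‖EuclideanSpace.single k (1:ℝ)‖ = 1 := by simp
      rw [h1, mul_one, Real.norm_eq_abs, abs_mul, abs_of_pos hr]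
      nlinarith [abs_nonneg t]
    have hc := hXconv hx (hball hq) (by linarith : (0:ℝ) ≤ 1 - δ / r) hδr' (by ring)
    convert hc using 1
    rw [hxδ]
    have hrne : r ≠ 0 := hr.ne'
    rw [div_eq_mul_inv]
    match_scalars <;> field_simp <;> ring
  have hmemU : ∀ (k : Fin d) (t : ℝ), |t| ≤ 1 →
      xδ + t • (δ • EuclideanSpace.single k (1:ℝ)) ∈ Us := fun k t ht => hXU (hmem k t ht)
  have hxδX : xδ ∈ X := by
    have hδr' : 0 ≤ δ / r := by positivity
    have hδr1 : δ / r ≤ 1 := by rw [div_le_one hr]; linarith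
    have hc := hXconv hx hp0 (by linarith : (0:ℝ) ≤ 1 - δ / r) hδr' (by ring)
    convert hc using 1
    rw [hxδ]
    match_scalars <;> ring
  have hxδU : xδ ∈ Us := hXU hxδX
  -- componentwise bound
  have hcomp : ∀ k : Fin d,
      |(2 * δ)⁻¹ * (f (xδ + δ • EuclideanSpace.single k (1:ℝ))
        - f (xδ - δ • EuclideanSpace.single k (1:ℝ))) - gf xδ k| ≤ L * δ := by
    intro k
    set v : EuclideanSpace ℝ (Fin d) := δ • EuclideanSpace.single k (1:ℝ) with hv
    have hnv : ‖v‖ = δ := by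
      rw [hv, norm_smul]; simp [abs_of_pos hδ]
    have hinner : ⟪gf xδ, v⟫ = δ * gf xδ k := by
      rw [hv, real_inner_smul_right, real_inner_comm, EuclideanSpace.inner_single_left]
      simp
    have h1 : |f (xδ + v) - f xδ - ⟪gf xδ, v⟫| ≤ L * ‖v‖ ^ 2 :=
      taylor_bound Us f gf L hL.le hgrad hLip xδ v (fun t ht =>
        hmemU k t (abs_le.mpr ⟨by linarith [ht.1], ht.2⟩))
    have h2 : |f (xδ + (-v)) - f xδ - ⟪gf xδ, -v⟫| ≤ L * ‖-v‖ ^ 2 :=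
      taylor_bound Us f gf L hL.le hgrad hLip xδ (-v) (fun t ht => by
        have := hmemU k (-t) (by rw [abs_neg]; exact abs_le.mpr ⟨by linarith [ht.1], ht.2⟩)
        simpa [neg_smul, smul_neg] using this)
    rw [hnv] at h1
    rw [norm_neg, hnv, inner_neg_right, hinner] at h2
    rw [hinner] at h1
    have hsub : |f (xδ + v) - f (xδ + (-v)) - 2 * δ * gf xδ k| ≤ 2 * (L * δ ^ 2) := by
      calc |f (xδ + v) - f (xδ + (-v)) - 2 * δ * gf xδ k|
          = |(f (xδ + v) - f xδ - δ * gf xδ k) - (f (xδ + (-v)) - f xδ - -(δ * gf xδ k))| := by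
            ring_nf
        _ ≤ |f (xδ + v) - f xδ - δ * gf xδ k| + |f (xδ + (-v)) - f xδ - -(δ * gf xδ k)| :=
            abs_sub _ _
        _ ≤ 2 * (L * δ ^ 2) := by linarith
    have h2δ : (0:ℝ) < 2 * δ := by linarith
    have heq : (2 * δ)⁻¹ * (f (xδ + v) - f (xδ - v)) - gf xδ k
        = (2 * δ)⁻¹ * (f (xδ + v) - f (xδ + (-v)) - 2 * δ * gf xδ k) := by
      rw [← sub_eq_add_neg]
      field_simp
    rw [heq, abs_mul, abs_of_pos (inv_pos.mpr h2δ)]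
    calc (2 * δ)⁻¹ * |f (xδ + v) - f (xδ + (-v)) - 2 * δ * gf xδ k|
        ≤ (2 * δ)⁻¹ * (2 * (L * δ ^ 2)) := by gcongr
      _ = L * δ := by field_simp
  -- the sum vector has components given by hcomp's LHS
  set c : Fin d → ℝ := fun k => (2 * δ)⁻¹ * (f (xδ + δ • EuclideanSpace.single k (1:ℝ))
      - f (xδ - δ • EuclideanSpace.single k (1:ℝ))) with hc
  set S : EuclideanSpace ℝ (Fin d) := ∑ k : Fin d, c k • EuclideanSpace.single k (1:ℝ) with hS
  have hSapp : ∀ j : Fin d, S j = c j := by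
    intro j
    rw [hS]
    have : (∑ k : Fin d, c k • EuclideanSpace.single k (1:ℝ)) j
        = ∑ k : Fin d, (c k • EuclideanSpace.single k (1:ℝ)) j := by
      rw [WithLp.ofLp_sum]; exact Finset.sum_apply j Finset.univ _
    rw [this]
    simp [EuclideanSpace.single_apply]
  have hnorm1 : ‖S - gf xδ‖ ≤ Real.sqrt d * (L * δ) := by
    have hLδ : 0 ≤ L * δ := by positivity
    rw [EuclideanSpace.norm_eq]
    have hb : ∀ j : Fin d, ‖(S - gf xδ) j‖ ^ 2 ≤ (L * δ) ^ 2 := by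
      intro j
      have happ : (S - gf xδ) j = c j - gf xδ j := by
        have : (S - gf xδ) j = S j - gf xδ j := rfl
        rw [this, hSapp]
      rw [happ, Real.norm_eq_abs]
      have habs : |c j - gf xδ j| ≤ L * δ := hcomp j
      exact pow_le_pow_left₀ (abs_nonneg _) habs 2
    calc Real.sqrt (∑ j : Fin d, ‖(S - gf xδ) j‖ ^ 2)
        ≤ Real.sqrt (∑ _j : Fin d, (L * δ) ^ 2) :=
          Real.sqrt_le_sqrt (Finset.sum_le_sum fun j _ => hb j)
      _ = Real.sqrt (d * (L * δ) ^ 2) := by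
          rw [Finset.sum_const, Finset.card_univ, Fintype.card_fin, nsmul_eq_mul]
      _ = Real.sqrt d * (L * δ) := by
          rw [Real.sqrt_mul (Nat.cast_nonneg d), Real.sqrt_sq hLδ]
  have hnorm2 : ‖gf xδ - gf x‖ ≤ L * (δ / r) * M := by
    have hd : ‖xδ - x‖ = (δ / r) * ‖x - p0‖ := by
      rw [hxδ]
      have : x - (δ / r) • (x - p0) - x = -((δ / r) • (x - p0)) := by abel
      rw [this, norm_neg, norm_smul, Real.norm_eq_abs, abs_of_pos (by positivity : (0:ℝ) < δ / r)]
    calc ‖gf xδ - gf x‖ ≤ L * ‖xδ - x‖ := hLip x (hXU hx) xδ hxδU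
      _ = L * ((δ / r) * ‖x - p0‖) := by rw [hd]
      _ ≤ L * ((δ / r) * M) := by gcongr; exact hM x hx
      _ = L * (δ / r) * M := by ring
  have htri : ‖S - gf x‖ ≤ ‖S - gf xδ‖ + ‖gf xδ - gf x‖ := by
    have : S - gf x = (S - gf xδ) + (gf xδ - gf x) := by abel
    rw [this]; exact norm_add_le _ _
  have hfinal : ‖S - gf x‖ ≤ (Real.sqrt d + M / r + 1) * L * δ := by
    have h3 : L * (δ / r) * M = M / r * L * δ := by ring
    have h4 : (0:ℝ) < L * δ := by positivity
    calc ‖S - gf x‖ ≤ Real.sqrt d * (L * δ) + L * (δ / r) * M :=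
          le_trans htri (by linarith [hnorm1, hnorm2])
      _ = (Real.sqrt d + M / r) * L * δ := by field_simp
      _ ≤ (Real.sqrt d + M / r + 1) * L * δ := by nlinarith
  exact hfinal
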